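/- Let l ≥ 1 be an integer and let n satisfy binom(2l−1, l−1) < n ≤ binom(2l+1, l). Let S be a finite set with |S| = n. Then every family of subsets of S shattering every 2-element subset of S has cardinality at least 2l, and there exists a family of subsets of S of cardinality at most 2l + 2 shattering every 2-element subset of S. In other words, 2l ≤ C(2,n) ≤ 2l + 2. -/

import Mathlib

/-- If `l ≥ 1` and `binom(2l-1, l-1) < n ≤ binom(2l+1, l)` and `|S| = n`, then every
family of subsets of `S` shattering every 2-element subset has cardinality at least
`2l`, and some family of cardinality at most `2l + 2` shatters every 2-element subset;
i.e. `2l ≤ C(2,n) ≤ 2l + 2`. -/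
theorem C_two_bounds {α : Type*} [Fintype α] [DecidableEq α] (l n : ℕ) (hl : 1 ≤ l)
    (hn1 : (2 * l - 1).choose (l - 1) < n) (hn2 : n ≤ (2 * l + 1).choose l)
    (hcard : Fintype.card α = n) :
    (∀ F : Finset (Finset α), (∀ A : Finset α, A.card = 2 → F.Shatters A) →
      2 * l ≤ F.card) ∧
    (∃ F : Finset (Finset α), F.card ≤ 2 * l + 2 ∧
      ∀ A : Finset α, A.card = 2 → F.Shatters A) := by
  constructor
  · -- lower bound
    intro F hF
    by_contra hcon
    push_neg at hcon
    have hm : F.card ≤ 2 * l - 1 := by omega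
    classical
    set e : α → Finset {E // E ∈ F} :=
      fun x => F.attach.filter (fun E => x ∈ E.1) with he
    have key : ∀ x y : α, x ≠ y → ∃ u : {E // E ∈ F}, u ∈ e x ∧ u ∉ e y := by
      intro x y hxy
      have hA : ({x, y} : Finset α).card = 2 := Finset.card_pair hxy
      have hsub : ({x} : Finset α) ⊆ {x, y} := by
        intro a ha; simp at ha; simp [ha]
      obtain ⟨u, hu, huA⟩ := hF _ hA hsub
      have hxu : x ∈ u := by
        have : x ∈ ({x, y} : Finset α) ∩ u := by rw [huA]; simp
        exact (Finset.mem_inter.1 this).2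
      have hyu : y ∉ u := by
        intro hy
        have : y ∈ ({x, y} : Finset α) ∩ u := by
          simp [Finset.mem_inter, hy]
        rw [huA] at this
        simp at this
        exact hxy this.symm
      exact ⟨⟨u, hu⟩, by simp [he, hxu], by simp [he, hyu]⟩
    have hinj : Function.Injective e := by
      intro x y hxy
      by_contra hne
      obtain ⟨u, hu1, hu2⟩ := key x y hne
      rw [hxy] at hu1
      exact hu2 hu1
    have hanti : IsAntichain (· ⊆ ·)
        ((Finset.univ.image e : Finset (Finset {E // E ∈ F})) : Set (Finset {E // E ∈ F})) := by
      intro a ha b hb hab hsub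
      simp only [Finset.coe_image, Set.mem_image] at ha hb
      obtain ⟨x, -, rfl⟩ := ha
      obtain ⟨y, -, rfl⟩ := hb
      have hxy : x ≠ y := fun h => hab (by rw [h])
      obtain ⟨u, hu1, hu2⟩ := key x y hxy
      exact hu2 (hsub hu1)
    have hs := IsAntichain.sperner hanti
    have hcardF : Fintype.card {E // E ∈ F} = F.card := Fintype.card_coe F
    rw [hcardF] at hs
    have himg : (Finset.univ.image e).card = n := by
      rw [Finset.card_image_of_injective _ hinj, Finset.card_univ, hcard]
    rw [himg] at hs
    have h1 : F.card.choose (F.card / 2) ≤ (2 * l - 1).choose (F.card / 2) :=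
      Nat.choose_le_choose _ hm
    have h2 : (2 * l - 1).choose (F.card / 2) ≤ (2 * l - 1).choose ((2 * l - 1) / 2) :=
      Nat.choose_le_middle _ _
    have h3 : (2 * l - 1) / 2 = l - 1 := by omega
    rw [h3] at h2
    omega
  · -- upper bound
    classical
    set z : Fin (2 * l + 2) := ⟨0, by omega⟩ with hz
    set 𝒯 : Finset (Finset (Fin (2 * l + 2))) :=
      (Finset.powersetCard l ((Finset.univ : Finset (Fin (2 * l + 2))).erase z)).image
        (insert z) with hT
    have hTmem : ∀ T ∈ 𝒯, z ∈ T ∧ T.card = l + 1 := by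
      intro T hTm
      simp only [hT, Finset.mem_image, Finset.mem_powersetCard] at hTm
      obtain ⟨s, ⟨hs1, hs2⟩, rfl⟩ := hTm
      have hzs : z ∉ s := fun h => (Finset.mem_erase.1 (hs1 h)).1 rfl
      exact ⟨Finset.mem_insert_self _ _, by rw [Finset.card_insert_of_notMem hzs, hs2]⟩
    have hTcard : 𝒯.card = (2 * l + 1).choose l := by
      rw [hT, Finset.card_image_of_injOn, Finset.card_powersetCard]
      · congr 1
        rw [Finset.card_erase_of_mem (Finset.mem_univ z), Finset.card_univ,
          Fintype.card_fin]
        omega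
      · intro s hs t ht hst
        simp only [Finset.mem_coe, Finset.mem_powersetCard] at hs ht
        have hzs : z ∉ s := fun h => (Finset.mem_erase.1 (hs.1 h)).1 rfl
        have hzt : z ∉ t := fun h => (Finset.mem_erase.1 (ht.1 h)).1 rfl
        rw [← Finset.erase_insert hzs, ← Finset.erase_insert hzt, hst]
    have hle : Fintype.card α ≤ Fintype.card {T // T ∈ 𝒯} := by
      rw [Fintype.card_coe, hTcard, hcard]; exact hn2
    obtain ⟨f⟩ := Function.Embedding.nonempty_of_card_le hle
    set g : α → Finset (Fin (2 * l + 2)) := fun x => (f x : Finset (Fin (2 * l + 2)))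
      with hg
    have hgz : ∀ x, z ∈ g x := fun x => (hTmem _ (f x).2).1
    have hgc : ∀ x, (g x).card = l + 1 := fun x => (hTmem _ (f x).2).2
    have hgne : ∀ x y : α, x ≠ y → g x ≠ g y := by
      intro x y hxy h
      exact hxy (f.injective (Subtype.ext h))
    refine ⟨(Finset.univ : Finset (Fin (2 * l + 2))).image
      (fun i => Finset.univ.filter (fun x => i ∈ g x)), ?_, ?_⟩
    · calc _ ≤ (Finset.univ : Finset (Fin (2 * l + 2))).card := Finset.card_image_le
        _ = 2 * l + 2 := by rw [Finset.card_univ, Fintype.card_fin]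
    · intro A hA
      obtain ⟨x, y, hxy, rfl⟩ := Finset.card_eq_two.1 hA
      intro t ht
      -- witnesses
      have hdiff : ∀ a b : α, a ≠ b → ∃ i, i ∈ g a ∧ i ∉ g b := by
        intro a b hab
        by_contra h
        push_neg at h
        exact hgne a b hab (Finset.eq_of_subset_of_card_le h (by rw [hgc, hgc]))
      have hout : ∃ i, i ∉ g x ∧ i ∉ g y := by
        have hzin : z ∈ g x ∩ g y := Finset.mem_inter.2 ⟨hgz x, hgz y⟩
        have h1 : (g x ∪ g y).card + (g x ∩ g y).card = (l + 1) + (l + 1) := by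
          rw [Finset.card_union_add_card_inter, hgc, hgc]
        have h2 : 1 ≤ (g x ∩ g y).card := Finset.card_pos.2 ⟨z, hzin⟩
        have h3 : (g x ∪ g y).card < Fintype.card (Fin (2 * l + 2)) := by
          rw [Fintype.card_fin]; omega
        have h4 : (g x ∪ g y)ᶜ.Nonempty := by
          rw [← Finset.card_pos, Finset.card_compl]; omega
        obtain ⟨i, hi⟩ := h4
        rw [Finset.mem_compl, Finset.mem_union] at hi
        push_neg at hi
        exact ⟨i, hi.1, hi.2⟩
      have hmemF : ∀ i : Fin (2 * l + 2),
          (Finset.univ.filter (fun x => i ∈ g x)) ∈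
            (Finset.univ : Finset (Fin (2 * l + 2))).image
              (fun i => Finset.univ.filter (fun x => i ∈ g x)) :=
        fun i => Finset.mem_image_of_mem _ (Finset.mem_univ i)
      by_cases hxt : x ∈ t <;> by_cases hyt : y ∈ t
      · -- t = {x, y}
        have htxy : t = {x, y} := Finset.Subset.antisymm ht (by
          intro a ha; simp at ha; rcases ha with rfl | rfl <;> assumption)
        refine ⟨_, hmemF z, ?_⟩
        rw [htxy]
        ext a
        simp only [Finset.mem_inter, Finset.mem_insert, Finset.mem_singleton,
          Finset.mem_filter, Finset.mem_univ, true_and]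
        constructor
        · exact fun h => h.1
        · rintro (rfl | rfl) <;> exact ⟨by simp, hgz _⟩
      · -- t = {x}
        have htx : t = {x} := by
          ext a
          simp only [Finset.mem_singleton]
          constructor
          · intro ha
            have := ht ha
            simp at this
            rcases this with rfl | rfl
            · rfl
            · exact absurd ha hyt
          · rintro rfl; exact hxt
        obtain ⟨i, hi1, hi2⟩ := hdiff x y hxy
        refine ⟨_, hmemF i, ?_⟩
        rw [htx]
        ext a
        simp only [Finset.mem_inter, Finset.mem_insert, Finset.mem_singleton,
          Finset.mem_filter, Finset.mem_univ, true_and]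
        constructor
        · rintro ⟨rfl | rfl, hi⟩
          · rfl
          · exact absurd hi hi2
        · rintro rfl; exact ⟨Or.inl rfl, hi1⟩
      · -- t = {y}
        have hty : t = {y} := by
          ext a
          simp only [Finset.mem_singleton]
          constructor
          · intro ha
            have := ht ha
            simp at this
            rcases this with rfl | rfl
            · exact absurd ha hxt
            · rfl
          · rintro rfl; exact hyt
        obtain ⟨i, hi1, hi2⟩ := hdiff y x (Ne.symm hxy)
        refine ⟨_, hmemF i, ?_⟩
        rw [hty]
        ext a
        simp only [Finset.mem_inter, Finset.mem_insert, Finset.mem_singleton,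
          Finset.mem_filter, Finset.mem_univ, true_and]
        constructor
        · rintro ⟨rfl | rfl, hi⟩
          · exact absurd hi hi2
          · rfl
        · rintro rfl; exact ⟨Or.inr rfl, hi1⟩
      · -- t = ∅
        have hte : t = ∅ := by
          rw [Finset.eq_empty_iff_forall_notMem]
          intro a ha
          have := ht ha
          simp at this
          rcases this with rfl | rfl
          · exact hxt ha
          · exact hyt ha
        obtain ⟨i, hi1, hi2⟩ := hout
        refine ⟨_, hmemF i, ?_⟩
        rw [hte, Finset.eq_empty_iff_forall_notMem]
        intro a ha
        simp only [Finset.mem_inter, Finset.mem_insert, Finset.mem_singleton,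
          Finset.mem_filter, Finset.mem_univ, true_and] at ha
        rcases ha with ⟨rfl | rfl, hi⟩
        · exact hi1 hi
        · exact hi2 hi
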